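/- Let V be a finite vertex set and N : V → Finset V assign to each vertex v a set of neighbors with v ∉ N(v). If H₁ and H₂ are both clustered neighborhood hypergraphs for N, then for all vertices u, v: u and v are connected in H₁ if and only if u and v are connected in H₂. (α-Invariance of Connected Components: the connected components of the spatial hypergraph model depend only on the points X and degrees d, not on the clustering parameter α.) -/

import Mathlib

/-- `H` is a clustered neighborhood hypergraph for the neighbor assignment `N`:
every hyperedge has size at least 2, every hyperedge is `{z} ∪ C` for some center `z`
and nonempty `C ⊆ N z`, and every vertex `v` shares a hyperedge with each of its
neighbors `u ∈ N v`. -/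
def IsClusteredNeighborhoodHypergraph {V : Type*} [DecidableEq V]
    (N : V → Finset V) (H : Set (Finset V)) : Prop :=
  (∀ h ∈ H, 2 ≤ h.card) ∧
  (∀ h ∈ H, ∃ z : V, ∃ C : Finset V, C.Nonempty ∧ C ⊆ N z ∧ h = insert z C) ∧
  (∀ v : V, ∀ u ∈ N v, ∃ h ∈ H, v ∈ h ∧ u ∈ h)

/-- Two vertices are connected in a hypergraph `H` if there is a finite sequence of
vertices from one to the other in which each consecutive pair lies in a common
hyperedge of `H`. -/
def HyperConnected {V : Type*} (H : Set (Finset V)) (u v : V) : Prop :=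
  Relation.ReflTransGen (fun a b => ∃ h ∈ H, a ∈ h ∧ b ∈ h) u v

private lemma hyperConnected_iff_neighbor {V : Type*} [DecidableEq V]
    (N : V → Finset V) (H : Set (Finset V))
    (hH : IsClusteredNeighborhoodHypergraph N H) (u v : V) :
    HyperConnected H u v ↔
      Relation.ReflTransGen (fun a b => b ∈ N a ∨ a ∈ N b) u v := by
  obtain ⟨_, hform, hcov⟩ := hH
  constructor
  · intro h
    induction h with
    | refl => exact .refl
    | tail _ hstep ih =>
      rename_i b c _
      obtain ⟨e, heH, hbe, hce⟩ := hstep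
      obtain ⟨z, C, -, hCN, rfl⟩ := hform e heH
      have key : ∀ x ∈ insert z C, Relation.ReflTransGen
          (fun a b => b ∈ N a ∨ a ∈ N b) z x := by
        intro x hx
        rcases Finset.mem_insert.1 hx with rfl | hx
        · exact .refl
        · exact Relation.ReflTransGen.single (Or.inl (hCN hx))
      have symm : Symmetric (fun a b => b ∈ N a ∨ a ∈ N b) := fun a b hab => hab.symm
      exact ih.trans (((@Relation.ReflTransGen.symmetric _ _ ⟨symm⟩).symm _ _ (key b hbe)).trans (key c hce))
  · intro h
    induction h with
    | refl => exact .refl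
    | tail _ hstep ih =>
      rename_i b c _
      rcases hstep with hc | hb
      · obtain ⟨e, heH, hbe, hce⟩ := hcov b c hc
        exact ih.tail ⟨e, heH, hbe, hce⟩
      · obtain ⟨e, heH, hce, hbe⟩ := hcov c b hb
        exact ih.tail ⟨e, heH, hbe, hce⟩

/-- α-invariance of connected components: any two clustered neighborhood hypergraphs
for the same neighbor assignment `N` have the same connectivity relation. -/
theorem connected_iff_of_clustered_neighborhood_hypergraphs
    {V : Type*} [Fintype V] [DecidableEq V]
    (N : V → Finset V) (hN : ∀ v, v ∉ N v)
    (H₁ H₂ : Set (Finset V))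
    (h₁ : IsClusteredNeighborhoodHypergraph N H₁)
    (h₂ : IsClusteredNeighborhoodHypergraph N H₂)
    (u v : V) :
    HyperConnected H₁ u v ↔ HyperConnected H₂ u v := by
  rw [hyperConnected_iff_neighbor N H₁ h₁, hyperConnected_iff_neighbor N H₂ h₂]
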